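/- arXiv:1902.03056 — 3 statements merged into one kernel-verified Lean document; each statement's English description precedes it below -/
import Mathlib

section
/- Every Einstein-symmetric tensor 𝒜 ∈ S_{2m,d} admits an eigenvalue decomposition 𝒜 = 𝒰 *_E 𝒟 *_E 𝒰^T with 𝒰 Einstein-orthogonal and 𝒟 diagonal Einstein-symmetric. -/
open Matrix


/-- A tensor in `T_{2m,d}`, with its `2m` indices split into two blocks of `m`. -/
abbrev Tensor2 (m d : ℕ) := (Fin m → Fin d) → (Fin m → Fin d) → ℝ

/-- The Einstein product on `T_{2m,d}`. -/
def eMul {m d : ℕ} (A B : Tensor2 m d) : Tensor2 m d :=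
  fun i j => ∑ k : Fin m → Fin d, A i k * B k j

/-- The tensor transpose: swap the two blocks of `m` indices. -/
def eT {m d : ℕ} (A : Tensor2 m d) : Tensor2 m d := fun i j => A j i

/-- The Einstein identity tensor. -/
def eId (m d : ℕ) : Tensor2 m d := fun i j => if i = j then 1 else 0

/-- The matricization `f : T_{2m,d} → ℝ^{d^m × d^m}` via the base-`d`
index encoding `i = i₁ + Σ_{k=2}^m (i_k - 1) d^{k-1}` (0-based here). -/
def matricize {m d : ℕ} (A : Tensor2 m d) : Matrix (Fin (d ^ m)) (Fin (d ^ m)) ℝ :=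
  fun p q => A (finFunctionFinEquiv.symm p) (finFunctionFinEquiv.symm q)

lemma eMul_eq {m d : ℕ} (A B : Tensor2 m d) :
    eMul A B = (Matrix.of A * Matrix.of B : Matrix _ _ ℝ) := by
  funext i j
  simp [eMul, Matrix.mul_apply]

lemma eT_eq {m d : ℕ} (A : Tensor2 m d) :
    eT A = (Matrix.of A)ᵀ := rfl

lemma eId_eq (m d : ℕ) : eId m d = (1 : Matrix (Fin m → Fin d) (Fin m → Fin d) ℝ) := by
  funext i j
  simp [eId, Matrix.one_apply]

/-- Every Einstein-symmetric tensor admits an eigenvalue decomposition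
`𝒜 = 𝒰 *_E 𝒟 *_E 𝒰ᵀ` with `𝒰` Einstein-orthogonal and `𝒟` diagonal
Einstein-symmetric. -/
theorem einstein_evd {m d : ℕ} (A : Tensor2 m d) (hA : eT A = A) :
    ∃ U D : Tensor2 m d,
      eMul (eT U) U = eId m d ∧
      (∀ i j : Fin m → Fin d, i ≠ j → D i j = 0) ∧
      eT D = D ∧
      A = eMul (eMul U D) (eT U) := by
  have hH : (Matrix.of A : Matrix (Fin m → Fin d) (Fin m → Fin d) ℝ).IsHermitian := by
    rw [Matrix.IsHermitian, Matrix.conjTranspose]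
    ext i j
    have h := congrFun (congrFun hA i) j
    simpa [eT] using h
  set U : Matrix (Fin m → Fin d) (Fin m → Fin d) ℝ := (hH.eigenvectorUnitary : Matrix (Fin m → Fin d) (Fin m → Fin d) ℝ) with hU
  set D : Matrix (Fin m → Fin d) (Fin m → Fin d) ℝ :=
    Matrix.diagonal (RCLike.ofReal ∘ hH.eigenvalues) with hD
  have hstar : star U = Uᵀ := rfl
  refine ⟨U, D, ?_, ?_, ?_, ?_⟩
  · rw [eId_eq]
    show Uᵀ * U = 1
    rw [← hstar]
    exact Matrix.mem_unitaryGroup_iff'.mp hH.eigenvectorUnitary.2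
  · intro i j hij
    simp [hD, Matrix.diagonal_apply_ne _ hij]
  · funext i j
    rcases eq_or_ne i j with h | h
    · show D j i = D i j
      rw [h]
    · show D j i = D i j
      simp [hD, Matrix.diagonal_apply_ne _ h, Matrix.diagonal_apply_ne _ (Ne.symm h)]
  · show A = (Matrix.of (U * D) * Uᵀ : Matrix _ _ ℝ)
    rw [← hstar]
    exact hH.spectral_theorem
end

section
/- For an Einstein-symmetric real tensor 𝒜 ∈ T_{2m,d}, if Z-eigenvalues of 𝒜 exist, then the maximum Einstein-eigenvalue of 𝒜 (i.e., the maximum eigenvalue of the symmetric matrix f(𝒜)) is at least the maximum Z-eigenvalue: λ^E_max(𝒜) ≥ λ^Z_max(𝒜). -/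
open Matrix in
lemma quadform_le_max_eig {n : Type*} [Fintype n] [DecidableEq n] [Nonempty n]
    {M : Matrix n n ℝ} (hM : M.IsHermitian) (y : n → ℝ) (hy : y ⬝ᵥ y = 1) :
    ∃ k, y ⬝ᵥ M *ᵥ y ≤ hM.eigenvalues k := by
  set U : Matrix n n ℝ := (hM.eigenvectorUnitary : Matrix n n ℝ) with hU
  set z : n → ℝ := star U *ᵥ y with hz
  have hUnit : U * star U = 1 := (Unitary.mem_iff.mp hM.eigenvectorUnitary.prop).2
  have hsU : star U = Uᵀ := by
    ext i j
    simp [Matrix.star_eq_conjTranspose, Matrix.conjTranspose_apply]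
  have key : ∀ (w : n → ℝ), y ⬝ᵥ (U *ᵥ w) = z ⬝ᵥ w := by
    intro w
    rw [Matrix.dotProduct_mulVec, hz, hsU, Matrix.mulVec_transpose]
  have h2 : z ⬝ᵥ z = 1 := by
    rw [hz]
    nth_rewrite 1 [hsU, Matrix.mulVec_transpose]
    rw [← Matrix.dotProduct_mulVec, Matrix.mulVec_mulVec, hUnit, Matrix.one_mulVec, hy]
  have h1 : y ⬝ᵥ M *ᵥ y = ∑ i, hM.eigenvalues i * z i ^ 2 := by
    nth_rewrite 1 [hM.spectral_theorem]
    rw [Unitary.conjStarAlgAut_apply, ← hU, ← Matrix.mulVec_mulVec, ← Matrix.mulVec_mulVec, key]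
    simp [dotProduct, Matrix.mulVec_diagonal]
    congr 1; ext i; ring
  obtain ⟨k, hk⟩ := Finite.exists_max hM.eigenvalues
  refine ⟨k, ?_⟩
  rw [h1]
  calc ∑ i, hM.eigenvalues i * z i ^ 2
      ≤ ∑ i, hM.eigenvalues k * z i ^ 2 := by
        apply Finset.sum_le_sum
        intro i _
        exact mul_le_mul_of_nonneg_right (hk i) (sq_nonneg _)
    _ = hM.eigenvalues k := by
        rw [← Finset.mul_sum]
        have : ∑ i, z i ^ 2 = 1 := by
          rw [← h2]; simp [dotProduct, sq]
        rw [this, mul_one]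

/-- Matricization of an order-`2m` tensor: the first `m` indices encode the
row, the last `m` indices the column, in base `d`. -/
def matricizeFull {m d : ℕ} (A : (Fin (2 * m) → Fin d) → ℝ) :
    Matrix (Fin (d ^ m)) (Fin (d ^ m)) ℝ :=
  fun p q => A (fun k =>
    Fin.append (finFunctionFinEquiv.symm p) (finFunctionFinEquiv.symm q)
      (Fin.cast (two_mul m) k))

open Matrix in
/-- For an Einstein-symmetric tensor `𝒜 ∈ T_{2m,d}`, every Z-eigenvalue of
`𝒜` is at most some eigenvalue of the symmetric matrix `f(𝒜)`; i.e.
`λ^E_max(𝒜) ≥ λ^Z_max(𝒜)`. -/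
theorem eEig_max_ge_zEig_max {m d : ℕ} (hm : 1 ≤ m)
    (A : (Fin (2 * m) → Fin d) → ℝ)
    (hsym : ∀ i j : Fin m → Fin d,
      A (fun k => Fin.append i j (Fin.cast (two_mul m) k)) =
        A (fun k => Fin.append j i (Fin.cast (two_mul m) k)))
    (hH : (matricizeFull A).IsHermitian)
    (lam : ℝ) (x : Fin d → ℝ)
    (hx : ∑ i, x i ^ 2 = 1)
    (heig : ∀ j : Fin d,
      ∑ i : Fin (2 * m - 1) → Fin d,
          A (fun k => (Fin.cons j i : Fin (2 * m - 1 + 1) → Fin d) (Fin.cast (by omega : 2 * m = 2 * m - 1 + 1) k)) *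
            ∏ t, x (i t) = lam * x j) :
    ∃ k, lam ≤ hH.eigenvalues k := by
  -- d is positive
  have hd : 0 < d := by
    rcases Nat.eq_zero_or_pos d with h | h
    · subst h; simp at hx
    · exact h
  haveI : Nonempty (Fin (d ^ m)) := ⟨⟨0, pow_pos hd m⟩⟩
  set y : Fin (d ^ m) → ℝ := fun p => ∏ t, x (finFunctionFinEquiv.symm p t) with hy
  -- Step C : y has unit norm
  have hyy : y ⬝ᵥ y = 1 := by
    simp only [dotProduct, hy]
    rw [← Equiv.sum_comp (finFunctionFinEquiv (m := d) (n := m))]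
    simp only [Equiv.symm_apply_apply]
    have : ∀ i : Fin m → Fin d, (∏ t, x (i t)) * ∏ t, x (i t) = ∏ t, x (i t) ^ 2 := by
      intro i
      rw [← Finset.prod_mul_distrib]
      exact Finset.prod_congr rfl fun t _ => (sq (x (i t))).symm
    simp only [this]
    rw [← Fintype.piFinset_univ, ← Finset.prod_univ_sum (fun _ : Fin m => (Finset.univ : Finset (Fin d)))
      (fun _ v => x v ^ 2)]
    simp [hx]
  -- Step B : the quadratic form equals the full tensor contraction
  have hB : y ⬝ᵥ (matricizeFull A) *ᵥ y = ∑ f : Fin (2 * m) → Fin d, A f * ∏ k, x (f k) := by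
    let e1 : ((Fin m → Fin d) × (Fin m → Fin d)) ≃ (Fin (2 * m) → Fin d) :=
      (Fin.appendEquiv m m).trans
        (Equiv.arrowCongr (finCongr (two_mul m)) (Equiv.refl (Fin d))).symm
    rw [← Equiv.sum_comp e1, Fintype.sum_prod_type]
    have he1 : ∀ i j : Fin m → Fin d,
        e1 (i, j) = fun k => Fin.append i j (Fin.cast (two_mul m) k) := by intro i j; rfl
    have hprod : ∀ i j : Fin m → Fin d,
        ∏ k, x (e1 (i, j) k) = (∏ t, x (i t)) * ∏ t, x (j t) := by
      intro i j
      rw [he1, ← Equiv.prod_comp (finCongr (two_mul m).symm)]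
      simp only [finCongr_apply]
      have hc : ∀ k : Fin (m + m), Fin.cast (two_mul m) (Fin.cast (two_mul m).symm k) = k :=
        fun k => rfl
      simp only [hc]
      rw [Fin.prod_univ_add]
      congr 1
      · exact Finset.prod_congr rfl fun t _ => by rw [Fin.append_left]
      · exact Finset.prod_congr rfl fun t _ => by rw [Fin.append_right]
    simp only [dotProduct, Matrix.mulVec, dotProduct, hy]
    rw [← Equiv.sum_comp (finFunctionFinEquiv (m := d) (n := m))]
    apply Finset.sum_congr rfl; intro i _
    rw [Finset.mul_sum, ← Equiv.sum_comp (finFunctionFinEquiv (m := d) (n := m))]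
    apply Finset.sum_congr rfl; intro j _
    rw [hprod, he1]
    simp only [matricizeFull, Equiv.symm_apply_apply]
    ring
  -- Step A : the full tensor contraction equals lam
  have hA : ∑ f : Fin (2 * m) → Fin d, A f * ∏ k, x (f k) = lam := by
    have h2m : 2 * m = 2 * m - 1 + 1 := by omega
    let e2 : (Fin d × (Fin (2 * m - 1) → Fin d)) ≃ (Fin (2 * m) → Fin d) :=
      (Fin.consEquiv (fun _ : Fin (2 * m - 1 + 1) => Fin d)).trans
        ((Equiv.arrowCongr (finCongr h2m) (Equiv.refl (Fin d))).symm)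
    rw [← Equiv.sum_comp e2]
    have he2 : ∀ (j : Fin d) (i : Fin (2 * m - 1) → Fin d),
        e2 (j, i) = fun k => (Fin.cons j i : Fin (2 * m - 1 + 1) → Fin d) (Fin.cast h2m k) := by
      intro j i; rfl
    rw [Fintype.sum_prod_type]
    have hpr : ∀ (j : Fin d) (i : Fin (2 * m - 1) → Fin d),
        ∏ k, x (e2 (j, i) k) = x j * ∏ t, x (i t) := by
      intro j i
      rw [he2]
      rw [← Equiv.prod_comp (finCongr h2m.symm)]
      simp only [finCongr_apply]
      have : ∀ k : Fin (2 * m - 1 + 1), Fin.cast h2m (Fin.cast h2m.symm k) = k := fun k => rfl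
      simp only [this]
      rw [Fin.prod_univ_succ]
      simp
    calc ∑ j, ∑ i : Fin (2 * m - 1) → Fin d, A (e2 (j, i)) * ∏ k, x (e2 (j, i) k)
        = ∑ j, ∑ i : Fin (2 * m - 1) → Fin d,
          (A (fun k => (Fin.cons j i : Fin (2 * m - 1 + 1) → Fin d) (Fin.cast h2m k)) *
            ∏ t, x (i t)) * x j := by
          apply Finset.sum_congr rfl; intro j _
          apply Finset.sum_congr rfl; intro i _
          rw [hpr, he2]; ring
      _ = ∑ j, lam * x j * x j := by
          apply Finset.sum_congr rfl; intro j _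
          rw [← Finset.sum_mul, heig j]
      _ = lam := by
          simp only [mul_assoc, ← Finset.mul_sum]
          have : ∑ j, x j * x j = 1 := by
            rw [← hx]; apply Finset.sum_congr rfl; intros; ring
          rw [this, mul_one]
  obtain ⟨k, hk⟩ := quadform_le_max_eig hH y hyy
  exact ⟨k, by rw [← hA, ← hB]; exact hk⟩
end

section
/- There exists a tensor PSD but not Einstein-PSD: the tensor 𝒜 ∈ T_{4,3} with entries a_{1122}=a_{1212}=a_{1221}=a_{2112}=a_{2121}=a_{2211}=1 and all other entries 0 satisfies 𝒜x⁴ = 6x₁²x₂² ≥ 0 for all x ∈ ℝ³, yet its matricization f(𝒜) ∈ ℝ^{9×9} is not positive semidefinite (for y = e₁ − e₅ one has y^T f(𝒜) y = −2 < 0). -/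
open Matrix

/-- Matricization of an order-4, dimension-3 tensor into a `9 × 9` matrix
via the base-3 index encoding on each pair of indices. -/
def matricize4 (A : (Fin 2 → Fin 3) → (Fin 2 → Fin 3) → ℝ) :
    Matrix (Fin (3 ^ 2)) (Fin (3 ^ 2)) ℝ :=
  fun p q => A (finFunctionFinEquiv.symm p) (finFunctionFinEquiv.symm q)

/-- The tensor of Example 4.5: `a_{1122} = a_{1212} = a_{1221} = a_{2112}
= a_{2121} = a_{2211} = 1` (1-based), all other entries 0, written with its
four indices split into two pairs. -/
def exTensor : (Fin 2 → Fin 3) → (Fin 2 → Fin 3) → ℝ :=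
  fun i j =>
    if (i 0 = 0 ∧ i 1 = 0 ∧ j 0 = 1 ∧ j 1 = 1) ∨
       (i 0 = 0 ∧ i 1 = 1 ∧ j 0 = 0 ∧ j 1 = 1) ∨
       (i 0 = 0 ∧ i 1 = 1 ∧ j 0 = 1 ∧ j 1 = 0) ∨
       (i 0 = 1 ∧ i 1 = 0 ∧ j 0 = 0 ∧ j 1 = 1) ∨
       (i 0 = 1 ∧ i 1 = 0 ∧ j 0 = 1 ∧ j 1 = 0) ∨
       (i 0 = 1 ∧ i 1 = 1 ∧ j 0 = 0 ∧ j 1 = 0) then 1 else 0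

set_option maxHeartbeats 1000000 in
private lemma exTensor_sum_eq (x : Fin 3 → ℝ) :
    ∑ i : Fin 2 → Fin 3, ∑ j : Fin 2 → Fin 3,
        exTensor i j * (∏ t, x (i t)) * ∏ t, x (j t)
      = 6 * (x 0) ^ 2 * (x 1) ^ 2 := by
  rw [← Equiv.sum_comp (piFinTwoEquiv (fun _ => Fin 3)).symm]
  conv_lhs => enter [2, p]; rw [← Equiv.sum_comp (piFinTwoEquiv (fun _ => Fin 3)).symm]
  simp only [Fintype.sum_prod_type, Fin.sum_univ_three, Fin.prod_univ_two,
    piFinTwoEquiv_symm_apply, exTensor, Fin.cons_zero, Fin.cons_one]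
  norm_num [Fin.ext_iff]
  ring

set_option maxHeartbeats 1000000 in
private lemma matricize_quad_eq :
    (∑ p : Fin (3 ^ 2), ∑ q : Fin (3 ^ 2),
        (fun r : Fin (3 ^ 2) => if r = 0 then (1 : ℝ) else if r = 4 then -1 else 0) p *
          matricize4 exTensor p q *
          (fun r : Fin (3 ^ 2) => if r = 0 then (1 : ℝ) else if r = 4 then -1 else 0) q
      = -2) := by
  show (∑ p : Fin 9, ∑ q : Fin 9, _ = -2)
  simp only [Fin.sum_univ_succ, Finset.univ_unique, Fin.sum_univ_zero, matricize4, exTensor]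
  norm_num [Fin.ext_iff, finFunctionFinEquiv, show ((4:Fin 9):ℕ) = 4 from rfl,
    show ((1:Fin 9):ℕ) = 1 from rfl, show ((3:Fin 9):ℕ) = 3 from rfl]

/-- A tensor that is PSD but not Einstein-PSD: `𝒜 x⁴ = 6 x₁² x₂² ≥ 0` for
all `x ∈ ℝ³`, yet `f(𝒜)` is not a positive semidefinite matrix (the vector
`y = e₁ - e₅` gives `yᵀ f(𝒜) y = -2 < 0`). -/
theorem psd_not_einstein_psd :
    (∀ x : Fin 3 → ℝ,
        ∑ i : Fin 2 → Fin 3, ∑ j : Fin 2 → Fin 3,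
            exTensor i j * (∏ t, x (i t)) * ∏ t, x (j t)
          = 6 * (x 0) ^ 2 * (x 1) ^ 2) ∧
    (∀ x : Fin 3 → ℝ,
        0 ≤ ∑ i : Fin 2 → Fin 3, ∑ j : Fin 2 → Fin 3,
              exTensor i j * (∏ t, x (i t)) * ∏ t, x (j t)) ∧
    (∑ p : Fin (3 ^ 2), ∑ q : Fin (3 ^ 2),
        (fun r : Fin (3 ^ 2) => if r = 0 then (1 : ℝ) else if r = 4 then -1 else 0) p *
          matricize4 exTensor p q *
          (fun r : Fin (3 ^ 2) => if r = 0 then (1 : ℝ) else if r = 4 then -1 else 0) q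
      = -2) ∧
    ¬ (matricize4 exTensor).PosSemidef := by
  refine ⟨exTensor_sum_eq, fun x => ?_, matricize_quad_eq, fun h => ?_⟩
  · rw [exTensor_sum_eq]; positivity
  · set y : Fin (3 ^ 2) → ℝ :=
      fun r => if r = 0 then (1 : ℝ) else if r = 4 then -1 else 0 with hy
    have h0 := h.dotProduct_mulVec_nonneg y
    have hq : star y ⬝ᵥ (matricize4 exTensor) *ᵥ y
        = ∑ p : Fin (3 ^ 2), ∑ q : Fin (3 ^ 2),
            y p * matricize4 exTensor p q * y q := by
      simp only [dotProduct, mulVec, dotProduct, Pi.star_apply, star_trivial,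
        Finset.mul_sum, mul_assoc]
    rw [hq, matricize_quad_eq] at h0
    linarith
end
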